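/- arXiv:1908.07585 — 4 statements merged into one kernel-verified Lean document; each statement's English description precedes it below -/
import Mathlib

section
/- Let λ > 0 and let k be a real constant with k ≥ log(cosh(λ/m)) / (λ/m). Let z_1,…,z_m be i.i.d. draws from D, let ε_1,…,ε_m be i.i.d. Rademacher random variables, let f ∼ P be a random {0,1}-valued function, with z's, ε's and f mutually independent. Then E_{f∼P} E_{S} E_{ε} [ exp( (λ/m)·Σ_{i=1}^m (ε_i − k)·f(z_i) ) ] ≤ 1. -/
open MeasureTheory Real

/-- Empirical risk of a loss function `ℓ f` on a sample `S` of size `m`. -/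
noncomputable def empRisk {Z F : Type*} (ℓ : F → Z → ℝ) {m : ℕ} (S : Fin m → Z) (f : F) : ℝ :=
  (m : ℝ)⁻¹ * ∑ i, ℓ f (S i)

/-- Risk (expected loss) of `ℓ f` under the data distribution `D`. -/
noncomputable def risk {Z F : Type*} [MeasurableSpace Z] (D : Measure Z) (ℓ : F → Z → ℝ)
    (f : F) : ℝ := ∫ z, ℓ f z ∂D

/-- Empirical risk of a Gibbs classifier (distribution) `Q`. -/
noncomputable def gibbsEmpRisk {Z F : Type*} [MeasurableSpace F] (ℓ : F → Z → ℝ) {m : ℕ}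
    (S : Fin m → Z) (Q : Measure F) : ℝ := ∫ f, empRisk ℓ S f ∂Q

/-- Risk of a Gibbs classifier (distribution) `Q`. -/
noncomputable def gibbsRisk {Z F : Type*} [MeasurableSpace Z] [MeasurableSpace F]
    (D : Measure Z) (ℓ : F → Z → ℝ) (Q : Measure F) : ℝ := ∫ f, risk D ℓ f ∂Q

/-- Kullback–Leibler divergence of `Q` from `P` (meaningful when `Q ≪ P` and the
log-likelihood ratio is `Q`-integrable). -/
noncomputable def KL {F : Type*} [MeasurableSpace F] (Q P : Measure F) : ℝ :=
  ∫ f, llr Q P f ∂Q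

/-- A Rademacher variable realized from a fair coin: `+1` on `true`, `-1` on `false`. -/
noncomputable def rad (b : Bool) : ℝ := if b then 1 else -1

/-- The fair-coin distribution on `Bool`, realizing Rademacher random variables via `rad`. -/
noncomputable def radMeasure : Measure Bool := (PMF.uniformOfFintype Bool).toMeasure

instance : IsProbabilityMeasure radMeasure := by
  unfold radMeasure; infer_instance


lemma radMeasure_singleton (b : Bool) : radMeasure {b} = 2⁻¹ := by
  unfold radMeasure
  rw [PMF.toMeasure_apply_singleton _ _ (measurableSet_singleton b)]
  simp [PMF.uniformOfFintype_apply]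

lemma int_le_one {α : Type*} [MeasurableSpace α] (μ : Measure α) [IsProbabilityMeasure μ]
    {g : α → ℝ} (h : ∀ x, g x ≤ 1) : ∫ x, g x ∂μ ≤ 1 := by
  by_cases hi : Integrable g μ
  · calc ∫ x, g x ∂μ ≤ ∫ _ : α, (1:ℝ) ∂μ := integral_mono hi (integrable_const 1) h
      _ = 1 := by simp
  · rw [integral_undef hi]; norm_num

/-- The key shifted-Rademacher moment bound: if `k ≥ log (cosh (λ/m)) / (λ/m)`, then the
exponential moment of the shifted Rademacher process is at most `1`. -/
theorem stmt7 {Z F : Type*} [MeasurableSpace Z] [MeasurableSpace F]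
    (D : Measure Z) [IsProbabilityMeasure D]
    (ℓ : F → Z → ℝ)
    (hℓ : ∀ f z, ℓ f z = 0 ∨ ℓ f z = 1)
    (hℓZ : ∀ f, Measurable (ℓ f))
    (hℓF : ∀ z, Measurable fun f => ℓ f z)
    (P : Measure F) [IsProbabilityMeasure P]
    (m : ℕ) (hm : 0 < m)
    (lam k : ℝ) (hlam : 0 < lam)
    (hk : Real.log (Real.cosh (lam / m)) / (lam / m) ≤ k) :
    (∫ f, ∫ S : Fin m → Z, ∫ ε : Fin m → Bool,
        Real.exp ((lam / m) * ∑ i, (rad (ε i) - k) * ℓ f (S i))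
      ∂(Measure.pi fun _ : Fin m => radMeasure)
      ∂(Measure.pi fun _ : Fin m => D) ∂P) ≤ 1 := by
  set c := lam / m with hcdef
  have hc : (0:ℝ) < c := div_pos hlam (by exact_mod_cast hm)
  have hsingle : ∀ a : ℝ, a = 0 ∨ a = 1 →
      ∫ b, Real.exp (c * ((rad b - k) * a)) ∂radMeasure ≤ 1 := by
    intro a ha
    have hint : ∫ b, Real.exp (c * ((rad b - k) * a)) ∂radMeasure
        = (Real.exp (c * ((1 - k) * a)) + Real.exp (c * ((-1 - k) * a))) / 2 := by
      rw [integral_fintype (Integrable.of_finite)]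
      simp [rad, measureReal_def, radMeasure_singleton]
      ring
    rcases ha with h0 | h1
    · rw [hint, h0]; simp
    · rw [hint, h1]
      have hlog : Real.log (Real.cosh c) ≤ k * c := (div_le_iff₀ hc).mp hk
      have hcosh : Real.cosh c ≤ Real.exp (k * c) := by
        calc Real.cosh c = Real.exp (Real.log (Real.cosh c)) :=
              (Real.exp_log (Real.cosh_pos c)).symm
          _ ≤ Real.exp (k * c) := Real.exp_le_exp.mpr hlog
      have heq : (Real.exp (c * ((1 - k) * 1)) + Real.exp (c * ((-1 - k) * 1))) / 2
          = Real.exp (-(c * k)) * Real.cosh c := by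
        rw [Real.cosh_eq, show c * ((1 - k) * 1) = -(c * k) + c by ring,
          show c * ((-1 - k) * 1) = -(c * k) + (-c) by ring, Real.exp_add, Real.exp_add]
        ring
      rw [heq]
      calc Real.exp (-(c * k)) * Real.cosh c ≤ Real.exp (-(c * k)) * Real.exp (k * c) :=
            mul_le_mul_of_nonneg_left hcosh (Real.exp_pos _).le
        _ = 1 := by rw [← Real.exp_add]; ring_nf; exact Real.exp_zero
  have hinner : ∀ (f : F) (S : Fin m → Z),
      ∫ ε : Fin m → Bool, Real.exp (c * ∑ i, (rad (ε i) - k) * ℓ f (S i))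
        ∂(Measure.pi fun _ : Fin m => radMeasure) ≤ 1 := by
    intro f S
    letI : MeasureSpace Bool := ⟨radMeasure⟩
    haveI : SigmaFinite (volume : Measure Bool) := by
      change SigmaFinite radMeasure; infer_instance
    have h1 : (Measure.pi fun _ : Fin m => radMeasure) = (volume : Measure (Fin m → Bool)) :=
      (volume_pi).symm
    rw [h1]
    have h2 : ∀ ε : Fin m → Bool, Real.exp (c * ∑ i, (rad (ε i) - k) * ℓ f (S i))
        = ∏ i, Real.exp (c * ((rad (ε i) - k) * ℓ f (S i))) := by
      intro ε; rw [Finset.mul_sum, Real.exp_sum]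
    simp_rw [h2]
    rw [MeasureTheory.integral_fintype_prod_volume_eq_prod
      (fun i b => Real.exp (c * ((rad b - k) * ℓ f (S i))))]
    apply Finset.prod_le_one
    · intro i _; exact integral_nonneg fun b => (Real.exp_pos _).le
    · intro i _; exact hsingle _ (hℓ f (S i))
  apply int_le_one P
  intro f
  apply int_le_one
  intro S
  exact hinner f S
end

section
/- (Shifted symmetrization in deviation.) Fix constants c > c₂ > 0 and set c' = (c−c₂)/(1+c₂) and t' = t/(2(1+c₂)). For any class F of measurable functions f : Z → [0,1] and any t ≥ (1+c₂)²/(m·c₂): (1/4)·P_S( sup_{f ∈ F} [ L_D(f) − (1+c)·L̂_S(f) ] ≥ t ) ≤ P_{S,ε}( sup_{f ∈ F} [ ((1+c'/2)/m)·Σ_{i=1}^m ( ε_i − (c'/2)/(1+c'/2) )·f(z_i) ] ≥ t'/2 ), where ε_1,…,ε_m are i.i.d. Rademacher random variables independent of S. -/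
open MeasureTheory Real
open scoped ENNReal

/- ===== auxiliary lemmas ===== -/

lemma integrable_of_bdd {W : Type*} [MeasurableSpace W] (ρ : Measure W) [IsFiniteMeasure ρ]
    {f : W → ℝ} (hf : Measurable f) (C : ℝ) (h : ∀ x, |f x| ≤ C) : Integrable f ρ :=
  ⟨hf.aestronglyMeasurable, HasFiniteIntegral.of_bounded (C := C)
    (Filter.Eventually.of_forall (by simpa [Real.norm_eq_abs] using h))⟩

lemma outer_preimage_le {α : Type*} [MeasurableSpace α] {ρ : Measure α} {h : α → α}
    (hm : MeasurePreserving h ρ ρ) (C : Set α) : ρ (h ⁻¹' C) ≤ ρ C := by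
  calc ρ (h ⁻¹' C) ≤ ρ (h ⁻¹' (toMeasurable ρ C)) :=
        measure_mono (Set.preimage_mono (subset_toMeasurable _ _))
    _ = ρ (toMeasurable ρ C) := by
        rw [← hm.map_eq, Measure.map_apply hm.measurable (measurableSet_toMeasurable _ _)]
        rw [hm.map_eq]
    _ = ρ C := measure_toMeasurable _

lemma second_moment {Z : Type*} [MeasureSpace Z] [IsProbabilityMeasure (volume : Measure Z)]
    (h : Z → ℝ) (hmeas : Measurable h) (hb : ∀ z, |h z| ≤ 1) (hzero : ∫ z, h z = 0) (m : ℕ) :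
    ∫ S : Fin m → Z, (∑ i, h (S i))^2 ∂(Measure.pi fun _ : Fin m => (volume : Measure Z))
      = m * ∫ z, (h z)^2 := by
  classical
  have hpi : (Measure.pi fun _ : Fin m => (volume : Measure Z)) = (volume : Measure (Fin m → Z)) :=
    (volume_pi).symm
  rw [hpi]
  have hint : ∀ i j : Fin m, Integrable (fun S : Fin m → Z => h (S i) * h (S j)) := by
    intro i j
    refine integrable_of_bdd _ (((hmeas.comp (measurable_pi_apply i))).mul
      ((hmeas.comp (measurable_pi_apply j)))) 1 ?_
    intro S
    calc |h (S i) * h (S j)| = |h (S i)| * |h (S j)| := abs_mul _ _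
      _ ≤ 1 * 1 := mul_le_mul (hb _) (hb _) (abs_nonneg _) zero_le_one
      _ = 1 := mul_one _
  have key : ∀ i j : Fin m, (∫ S : Fin m → Z, h (S i) * h (S j))
      = if i = j then ∫ z, (h z)^2 else 0 := by
    intro i j
    by_cases hij : i = j
    · subst hij
      simp only [if_pos rfl]
      have : (fun S : Fin m → Z => h (S i) * h (S i))
          = fun S => ∏ k, (fun k z => if k = i then (h z)^2 else 1) k (S k) := by
        funext S
        rw [Finset.prod_ite_eq' Finset.univ i (fun k => (h (S k))^2)]
        simp [sq]
      rw [this, MeasureTheory.integral_fintype_prod_volume_eq_prod (ι := Fin m)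
        (fun k z => if k = i then (h z)^2 else 1)]
      have : ∀ k : Fin m, (∫ z, (if k = i then (h z)^2 else 1))
          = if k = i then ∫ z, (h z)^2 else 1 := by
        intro k; by_cases hk : k = i <;> simp [hk]
      rw [Finset.prod_congr rfl fun k _ => this k,
        Finset.prod_ite_eq' Finset.univ i (fun _ => ∫ z, (h z)^2)]
      simp
    · simp only [if_neg hij]
      have : (fun S : Fin m → Z => h (S i) * h (S j))
          = fun S => ∏ k, (fun k z =>
              (if k = i then h z else 1) * (if k = j then h z else 1)) k (S k) := by
        funext S
        rw [Finset.prod_mul_distrib, Finset.prod_ite_eq' Finset.univ i (fun k => h (S k)),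
          Finset.prod_ite_eq' Finset.univ j (fun k => h (S k))]
        simp
      rw [this, MeasureTheory.integral_fintype_prod_volume_eq_prod (ι := Fin m)
        (fun k z => (if k = i then h z else 1) * (if k = j then h z else 1))]
      refine Finset.prod_eq_zero (Finset.mem_univ i) ?_
      simp only [if_pos rfl, if_neg hij]
      simp [hzero]
  calc ∫ S : Fin m → Z, (∑ i, h (S i))^2
      = ∫ S : Fin m → Z, ∑ i, ∑ j, h (S i) * h (S j) := by
        congr 1; funext S; rw [sq, Finset.sum_mul_sum]
    _ = ∑ i, ∑ j, ∫ S : Fin m → Z, h (S i) * h (S j) := by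
        rw [integral_finset_sum _ fun i _ => integrable_finset_sum _ fun j _ => hint i j]
        exact Finset.sum_congr rfl fun i _ => integral_finset_sum _ fun j _ => hint i j
    _ = ∑ i : Fin m, ∑ j : Fin m, if i = j then ∫ z, (h z)^2 else 0 := by
        exact Finset.sum_congr rfl fun i _ => Finset.sum_congr rfl fun j _ => key i j
    _ = m * ∫ z, (h z)^2 := by simp [Finset.sum_ite_eq]

lemma cheb_main {Z : Type*} [MeasurableSpace Z] (D : Measure Z) [IsProbabilityMeasure D]
    (g : Z → ℝ) (hg : Measurable g) (hb : ∀ z, g z ∈ Set.Icc (0:ℝ) 1)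
    {m : ℕ} (hm : 0 < m) {a : ℝ} (ha : 0 < a) :
    (Measure.pi fun _ : Fin m => D)
        {S | a ≤ |(m:ℝ)⁻¹ * ∑ i, g (S i) - ∫ z, g z ∂D|}
      ≤ ENNReal.ofReal ((∫ z, g z ∂D) / (m * a^2)) := by
  letI : MeasureSpace Z := ⟨D⟩
  have hvol : (volume : Measure Z) = D := rfl
  set r : ℝ := ∫ z, g z ∂D with hr
  have hgint : Integrable g D := integrable_of_bdd D hg 1 (fun z => by
    rcases hb z with ⟨h0, h1⟩; rw [abs_le]; constructor <;> linarith)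
  have hr0 : 0 ≤ r := integral_nonneg fun z => (hb z).1
  have hr1 : r ≤ 1 := by
    calc r ≤ ∫ _ : Z, (1:ℝ) ∂D := integral_mono hgint (integrable_const 1) fun z => (hb z).2
      _ = 1 := by simp
  set h : Z → ℝ := fun z => g z - r with hh
  have hmeas : Measurable h := hg.sub measurable_const
  have hbh : ∀ z, |h z| ≤ 1 := fun z => by
    rcases hb z with ⟨h0, h1⟩; rw [abs_le]; constructor <;> simp [hh] <;> linarith
  have hzero : ∫ z, h z ∂D = 0 := by
    rw [hh]; rw [integral_sub hgint (integrable_const r)]; simp [← hr]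
  have hsq : ∫ z, (h z)^2 ∂D ≤ r := by
    have expand : ∀ z, (h z)^2 = g z^2 - 2*r*(g z) + r^2 := fun z => by simp [hh]; ring
    have hint2 : Integrable (fun z => g z^2) D := integrable_of_bdd D (hg.pow_const 2) 1
      (fun z => by rcases hb z with ⟨h0, h1⟩; rw [abs_le]; constructor <;> nlinarith)
    have : ∫ z, (h z)^2 ∂D = (∫ z, g z^2 ∂D) - r^2 := by
      calc ∫ z, (h z)^2 ∂D = ∫ z, (g z^2 - 2*r*(g z) + r^2) ∂D := by
            exact integral_congr_ae (Filter.Eventually.of_forall expand)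
        _ = (∫ z, g z^2 ∂D) - 2*r*r + r^2 := by
            have hint3 : Integrable (fun z => g z^2 - 2*r*g z) D :=
              hint2.sub (hgint.const_mul (2*r))
            rw [integral_add hint3 (integrable_const (r^2)),
              integral_sub hint2 (hgint.const_mul (2*r)), integral_const_mul]
            simp [← hr]
        _ = (∫ z, g z^2 ∂D) - r^2 := by ring
    rw [this]
    have : ∫ z, g z^2 ∂D ≤ r := by
      refine integral_mono hint2 hgint fun z => ?_
      rcases hb z with ⟨h0, h1⟩; nlinarith
    nlinarith [sq_nonneg r]
  set Y : (Fin m → Z) → ℝ := fun S => (m:ℝ)⁻¹ * ∑ i, g (S i) - r with hY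
  have hYh : ∀ S, Y S = (m:ℝ)⁻¹ * ∑ i, h (S i) := by
    intro S
    have : ∑ i, h (S i) = (∑ i, g (S i)) - m * r := by
      simp [hh, Finset.sum_sub_distrib]
    rw [hY]; simp only [this]
    field_simp
  have hYmeas : Measurable Y := by
    apply Measurable.sub _ measurable_const
    exact (Finset.measurable_sum _ fun i _ => hg.comp (measurable_pi_apply i)).const_mul _
  set pm : Measure (Fin m → Z) := Measure.pi fun _ : Fin m => D with hpm
  haveI : IsProbabilityMeasure pm := by rw [hpm]; infer_instance
  have hvar : ∫ S, (Y S)^2 ∂pm ≤ r / m := by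
    have : ∀ S, (Y S)^2 = ((m:ℝ)⁻¹)^2 * (∑ i, h (S i))^2 := fun S => by
      rw [hYh S, mul_pow]
    calc ∫ S, (Y S)^2 ∂pm = ((m:ℝ)⁻¹)^2 * ∫ S, (∑ i, h (S i))^2 ∂pm := by
          rw [← integral_const_mul]
          exact integral_congr_ae (Filter.Eventually.of_forall this)
      _ = ((m:ℝ)⁻¹)^2 * (m * ∫ z, (h z)^2 ∂D) := by
          rw [hpm, ← hvol, second_moment h hmeas hbh (by rw [hvol]; exact hzero) m]
      _ ≤ ((m:ℝ)⁻¹)^2 * (m * r) := by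
          have hm' : (0:ℝ) < m := Nat.cast_pos.mpr hm
          gcongr
      _ = r / m := by
          have hm' : (0:ℝ) < m := Nat.cast_pos.mpr hm
          field_simp
  have hYint2 : Integrable (fun S => (Y S)^2) pm := by
    refine integrable_of_bdd pm (hYmeas.pow_const 2) 1 fun S => ?_
    have hYb : |Y S| ≤ 1 := by
      rw [hYh S, abs_mul, abs_inv, Nat.abs_cast]
      have : |∑ i, h (S i)| ≤ (m:ℝ) := by
        calc |∑ i, h (S i)| ≤ ∑ i, |h (S i)| := Finset.abs_sum_le_sum_abs _ _
          _ ≤ ∑ _i : Fin m, (1:ℝ) := Finset.sum_le_sum fun i _ => hbh (S i)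
          _ = m := by simp
      have hm' : (0:ℝ) < m := Nat.cast_pos.mpr hm
      rw [inv_mul_le_iff₀ hm', mul_one]
      exact this
    calc |(Y S)^2| = (Y S)^2 := abs_of_nonneg (sq_nonneg _)
      _ ≤ 1 := by nlinarith [hYb, abs_nonneg (Y S), sq_abs (Y S)]
  have hmarkov : ENNReal.ofReal (a^2) * pm {S | a ≤ |Y S|} ≤ ENNReal.ofReal (r / m) := by
    have hsub : {S | a ≤ |Y S|} ⊆ {S | ENNReal.ofReal (a^2) ≤ ENNReal.ofReal ((Y S)^2)} := by
      intro S hS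
      simp only [Set.mem_setOf_eq] at hS ⊢
      apply ENNReal.ofReal_le_ofReal
      calc a^2 ≤ |Y S|^2 := by nlinarith [abs_nonneg (Y S)]
        _ = (Y S)^2 := sq_abs _
    calc ENNReal.ofReal (a^2) * pm {S | a ≤ |Y S|}
        ≤ ENNReal.ofReal (a^2) * pm {S | ENNReal.ofReal (a^2) ≤ ENNReal.ofReal ((Y S)^2)} :=
          mul_le_mul_right (measure_mono hsub) _
      _ ≤ ∫⁻ S, ENNReal.ofReal ((Y S)^2) ∂pm := by
          exact mul_meas_ge_le_lintegral₀
            ((hYmeas.pow_const 2).ennreal_ofReal.aemeasurable) _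
      _ = ENNReal.ofReal (∫ S, (Y S)^2 ∂pm) := by
          rw [← ofReal_integral_eq_lintegral_ofReal hYint2
            (Filter.Eventually.of_forall fun S => sq_nonneg _)]
      _ ≤ ENNReal.ofReal (r / m) := ENNReal.ofReal_le_ofReal hvar
  have ha2 : ENNReal.ofReal (a^2) ≠ 0 := by
    simp [ENNReal.ofReal_eq_zero, not_le]; positivity
  have hm2 : pm {S | a ≤ |Y S|} * ENNReal.ofReal (a^2) ≤ ENNReal.ofReal (r / m) := by
    rw [mul_comm]; exact hmarkov
  have := (ENNReal.le_div_iff_mul_le (Or.inl ha2) (Or.inl ENNReal.ofReal_ne_top)).mpr hm2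
  calc pm {S | a ≤ |Y S|} ≤ ENNReal.ofReal (r / m) / ENNReal.ofReal (a^2) := this
    _ = ENNReal.ofReal (r / m / a^2) := by
        rw [← ENNReal.ofReal_div_of_pos (by positivity)]
    _ = ENNReal.ofReal (r / (m * a^2)) := by rw [div_div]

lemma slice_lower_bound {α β : Type*} [MeasurableSpace α] [MeasurableSpace β]
    (μ : Measure α) (ν : Measure β) [SFinite ν]
    (A : Set α) (B : Set (α × β))
    (h : ∀ x ∈ A, 2⁻¹ ≤ ν {y | (x, y) ∈ B}) :
    2⁻¹ * μ A ≤ (μ.prod ν) B := by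
  set E := toMeasurable (μ.prod ν) B with hEdef
  have hE : MeasurableSet E := measurableSet_toMeasurable _ _
  have hBE : B ⊆ E := subset_toMeasurable _ _
  have hslice : ∀ x ∈ A, 2⁻¹ ≤ ν (Prod.mk x ⁻¹' E) := fun x hx =>
    le_trans (h x hx) (measure_mono fun y hy => hBE hy)
  set G := {x | 2⁻¹ ≤ ν (Prod.mk x ⁻¹' E)} with hGdef
  have hGmeas : MeasurableSet G :=
    measurableSet_le measurable_const (measurable_measure_prodMk_left hE)
  have hAG : A ⊆ G := hslice
  calc 2⁻¹ * μ A ≤ 2⁻¹ * μ G := mul_le_mul_right (measure_mono hAG) _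
    _ = ∫⁻ _x in G, 2⁻¹ ∂μ := by rw [setLIntegral_const, mul_comm]
    _ ≤ ∫⁻ x in G, ν (Prod.mk x ⁻¹' E) ∂μ :=
        setLIntegral_mono (measurable_measure_prodMk_left hE) fun x hx => hx
    _ ≤ ∫⁻ x, ν (Prod.mk x ⁻¹' E) ∂μ := setLIntegral_le_lintegral _ _
    _ = (μ.prod ν) E := (Measure.prod_apply hE).symm
    _ = (μ.prod ν) B := measure_toMeasurable _

lemma cylinder_right_le {α β : Type*} [MeasurableSpace α] [MeasurableSpace β]
    (μ : Measure α) (ν : Measure β) [IsProbabilityMeasure μ] [SFinite ν] (C : Set β) :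
    (μ.prod ν) {p : α × β | p.2 ∈ C} ≤ ν C := by
  calc (μ.prod ν) {p : α × β | p.2 ∈ C}
      ≤ (μ.prod ν) (Set.univ ×ˢ toMeasurable ν C) := by
        apply measure_mono; intro p hp
        exact ⟨Set.mem_univ _, subset_toMeasurable _ _ hp⟩
    _ = μ Set.univ * ν (toMeasurable ν C) := by rw [Measure.prod_prod]
    _ = ν C := by rw [measure_univ, one_mul, measure_toMeasurable]

lemma cylinder_left_le {α β : Type*} [MeasurableSpace α] [MeasurableSpace β]
    (μ : Measure α) (ν : Measure β) [SFinite μ] [IsProbabilityMeasure ν] (C : Set α) :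
    (μ.prod ν) {p : α × β | p.1 ∈ C} ≤ μ C := by
  calc (μ.prod ν) {p : α × β | p.1 ∈ C}
      ≤ (μ.prod ν) (toMeasurable μ C ×ˢ Set.univ) := by
        apply measure_mono; intro p hp
        exact ⟨subset_toMeasurable _ _ hp, Set.mem_univ _⟩
    _ = μ (toMeasurable μ C) * ν Set.univ := by rw [Measure.prod_prod]
    _ = μ C := by rw [measure_univ, mul_one, measure_toMeasurable]

lemma radMeasure_map_not : Measure.map Bool.not radMeasure = radMeasure := by
  unfold radMeasure
  rw [PMF.toMeasure_map (PMF.uniformOfFintype Bool) (f := Bool.not) (measurable_of_countable _)]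
  congr 1
  ext b
  rw [PMF.map_apply]
  rw [tsum_bool]
  cases b <;> simp [PMF.uniformOfFintype_apply]

lemma eb_measure_preserving {Z : Type*} [MeasurableSpace Z] (D : Measure Z)
    [IsProbabilityMeasure D] (m : ℕ) (b : Fin m → Bool) :
    MeasurePreserving
      (fun q : (Fin m → Z) × (Fin m → Z) =>
        ((fun i => if b i then q.1 i else q.2 i, fun i => if b i then q.2 i else q.1 i)
          : (Fin m → Z) × (Fin m → Z)))
      ((Measure.pi fun _ : Fin m => D).prod (Measure.pi fun _ : Fin m => D))
      ((Measure.pi fun _ : Fin m => D).prod (Measure.pi fun _ : Fin m => D)) := by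
  classical
  set φ := MeasurableEquiv.arrowProdEquivProdArrow Z Z (Fin m)
  have hφ : MeasurePreserving φ (Measure.pi fun _ : Fin m => D.prod D)
      ((Measure.pi fun _ : Fin m => D).prod (Measure.pi fun _ : Fin m => D)) :=
    measurePreserving_arrowProdEquivProdArrow Z Z (Fin m) (fun _ => D) (fun _ => D)
  have hsw : MeasurePreserving
      (fun p : Fin m → Z × Z => fun i => if b i then p i else (p i).swap)
      (Measure.pi fun _ : Fin m => D.prod D) (Measure.pi fun _ : Fin m => D.prod D) := by
    have := measurePreserving_pi (fun _ : Fin m => D.prod D) (fun _ : Fin m => D.prod D)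
      (f := fun i (x : Z × Z) => if b i then x else x.swap) (fun i => ?_)
    · exact this
    · by_cases hb : b i
      · simp only [hb, if_true]
        exact MeasurePreserving.id _
      · simp only [hb, if_false]
        exact Measure.measurePreserving_swap
  have heq : (fun q : (Fin m → Z) × (Fin m → Z) =>
        ((fun i => if b i then q.1 i else q.2 i, fun i => if b i then q.2 i else q.1 i)
          : (Fin m → Z) × (Fin m → Z)))
      = φ ∘ (fun p : Fin m → Z × Z => fun i => if b i then p i else (p i).swap) ∘ φ.symm := by
    funext q
    refine Prod.ext ?_ ?_ <;>
      · funext i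
        by_cases hb : b i <;>
          simp [φ, MeasurableEquiv.arrowProdEquivProdArrow, Equiv.arrowProdEquivProdArrow,
            hb, Prod.swap, Function.comp]
  rw [heq]
  exact hφ.comp (hsw.comp (hφ.symm _))

lemma rad_alg {c' : ℝ} (hc' : 0 < c') (b : Bool) (x y : ℝ) :
    (if b then y else x) - (1 + c') * (if b then x else y)
      = (1 + c' / 2) * ((rad b - (c' / 2) / (1 + c' / 2)) * y)
        + (1 + c' / 2) * ((rad (!b) - (c' / 2) / (1 + c' / 2)) * x) := by
  have h2 : (1 + c'/2) ≠ 0 := by positivity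
  cases b <;> simp [rad] <;> field_simp <;> ring

set_option maxHeartbeats 1000000 in
/-- Shifted symmetrization in deviation. -/
theorem stmt8 {Z F : Type*} [MeasurableSpace Z]
    (D : Measure Z) [IsProbabilityMeasure D]
    (ℓ : F → Z → ℝ)
    (hℓ : ∀ f z, ℓ f z ∈ Set.Icc (0 : ℝ) 1)
    (hℓZ : ∀ f, Measurable (ℓ f))
    (m : ℕ) (hm : 0 < m)
    (c c₂ : ℝ) (hc₂ : 0 < c₂) (hc : c₂ < c)
    (c' t t' : ℝ)
    (hc' : c' = (c - c₂) / (1 + c₂))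
    (ht' : t' = t / (2 * (1 + c₂)))
    (ht : (1 + c₂) ^ 2 / (m * c₂) ≤ t) :
    4⁻¹ * (Measure.pi fun _ : Fin m => D)
        {S | t ≤ ⨆ f : F, (risk D ℓ f - (1 + c) * empRisk ℓ S f)} ≤
      ((Measure.pi fun _ : Fin m => D).prod (Measure.pi fun _ : Fin m => radMeasure))
        {p | t' / 2 ≤ ⨆ f : F,
          ((1 + c' / 2) / m) *
            ∑ i, (rad (p.2 i) - (c' / 2) / (1 + c' / 2)) * ℓ f (p.1 i)} := by
  classical
  have hm' : (0:ℝ) < m := Nat.cast_pos.mpr hm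
  have h1c₂ : (0:ℝ) < 1 + c₂ := by linarith
  have hc'pos : 0 < c' := by rw [hc']; exact div_pos (by linarith) h1c₂
  have h1c' : (0:ℝ) < 1 + c' := by linarith
  have h1c'2 : (0:ℝ) < 1 + c' / 2 := by linarith
  have hccx : (1 + c₂) * (1 + c') = 1 + c := by rw [hc']; field_simp; ring
  have hccx' : c₂ * c' = c - c₂ - c' := by nlinarith [hccx]
  have ht0 : 0 < t := lt_of_lt_of_le (by positivity) ht
  have ht'0 : 0 < t' := by rw [ht']; positivity
  have ht'x : t = 2 * (1 + c₂) * t' := by rw [ht']; field_simp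
  have hκ0 : 0 ≤ (c' / 2) / (1 + c' / 2) := by positivity
  have ht'lb : (1 + c₂) / (2 * m * c₂) ≤ t' := by
    rw [ht', div_le_div_iff₀ (by positivity) (by positivity)]
    have h := (div_le_iff₀ (by positivity : (0:ℝ) < m * c₂)).mp ht
    nlinarith
  set μZ := Measure.pi fun _ : Fin m => D with hμZ
  set νB := Measure.pi fun _ : Fin m => radMeasure with hνB
  haveI : IsProbabilityMeasure μZ := by rw [hμZ]; infer_instance
  haveI : IsProbabilityMeasure νB := by rw [hνB]; infer_instance
  rcases isEmpty_or_nonempty F with hF | hF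
  · have hempty : {S : Fin m → Z | t ≤ ⨆ f : F, (risk D ℓ f - (1 + c) * empRisk ℓ S f)} = ∅ := by
      ext S
      simp only [Set.mem_setOf_eq, Set.mem_empty_iff_false, iff_false, not_le]
      rw [Real.iSup_of_isEmpty]
      exact ht0
    rw [hempty]
    simp
  haveI := hF
  -- basic bounds
  have hemp0 : ∀ (f : F) (S : Fin m → Z), 0 ≤ empRisk ℓ S f := fun f S => by
    unfold empRisk
    exact mul_nonneg (by positivity) (Finset.sum_nonneg fun i _ => (hℓ f (S i)).1)
  have hemp1 : ∀ (f : F) (S : Fin m → Z), empRisk ℓ S f ≤ 1 := fun f S => by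
    unfold empRisk
    have hs : ∑ i, ℓ f (S i) ≤ (m:ℝ) := by
      calc ∑ i, ℓ f (S i) ≤ ∑ _i : Fin m, (1:ℝ) :=
            Finset.sum_le_sum fun i _ => (hℓ f (S i)).2
        _ = m := by simp
    calc (m:ℝ)⁻¹ * ∑ i, ℓ f (S i) ≤ (m:ℝ)⁻¹ * m :=
          mul_le_mul_of_nonneg_left hs (by positivity)
      _ = 1 := inv_mul_cancel₀ (ne_of_gt hm')
  have hrisk0 : ∀ f : F, 0 ≤ risk D ℓ f := fun f =>
    integral_nonneg fun z => (hℓ f z).1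
  have hempmeas : ∀ f : F, Measurable (fun S : Fin m → Z => empRisk ℓ S f) := fun f =>
    (Finset.measurable_sum Finset.univ fun i _ =>
      (hℓZ f).comp (measurable_pi_apply i)).const_mul ((m:ℝ)⁻¹)
  -- Chebyshev bound for each fixed f
  have hcheb : ∀ f : F,
      (2⁻¹ : ℝ≥0∞) ≤ μZ {S' | risk D ℓ f ≤ (1 + c₂) * (empRisk ℓ S' f + t')} := by
    intro f
    set r := risk D ℓ f with hrdef
    have hCmeas : MeasurableSet {S' : Fin m → Z | r ≤ (1 + c₂) * (empRisk ℓ S' f + t')} :=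
      measurableSet_le measurable_const (((hempmeas f).add_const t').const_mul (1 + c₂))
    by_cases hr0 : r ≤ 0
    · have huniv : {S' : Fin m → Z | r ≤ (1 + c₂) * (empRisk ℓ S' f + t')} = Set.univ := by
        ext S'
        simp only [Set.mem_setOf_eq, Set.mem_univ, iff_true]
        nlinarith [hemp0 f S']
      rw [huniv, measure_univ]
      exact ENNReal.inv_le_one.mpr one_le_two
    · push_neg at hr0
      set a := (c₂/(1+c₂))*r + t' with hadef
      have hupos : 0 < c₂/(1+c₂) := by positivity
      have hapos : 0 < a := by positivity
      have hsubset : {S' : Fin m → Z | r ≤ (1 + c₂) * (empRisk ℓ S' f + t')}ᶜ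
          ⊆ {S' | a ≤ |(m:ℝ)⁻¹ * ∑ i, ℓ f (S' i) - ∫ z, ℓ f z ∂D|} := by
        intro S' hS'
        simp only [Set.mem_compl_iff, Set.mem_setOf_eq, not_le] at hS'
        simp only [Set.mem_setOf_eq]
        have hE : (m:ℝ)⁻¹ * ∑ i, ℓ f (S' i) = empRisk ℓ S' f := rfl
        have hI : ∫ z, ℓ f z ∂D = r := rfl
        rw [hE, hI, abs_sub_comm, le_abs]
        left
        have hfe : r - r/(1+c₂) = c₂/(1+c₂)*r := by field_simp; ring
        have h2 : empRisk ℓ S' f < r/(1+c₂) - t' := by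
          rw [lt_sub_iff_add_lt, lt_div_iff₀ h1c₂]
          linarith [hS']
        rw [hadef]
        linarith [hfe, h2]
      have hbnd := cheb_main D (ℓ f) (hℓZ f) (hℓ f) hm hapos
      have hIr : ∫ z, ℓ f z ∂D = r := rfl
      rw [hIr] at hbnd
      have hnum : r / (m * a^2) ≤ 1/2 := by
        have h1 : 4*(c₂/(1+c₂))*r*t' ≤ a^2 := by
          nlinarith [sq_nonneg ((c₂/(1+c₂))*r - t')]
        have h2 : (c₂/(1+c₂)) * (1+c₂) = c₂ := by field_simp
        have h3 : (1+c₂) ≤ 2*(m:ℝ)*c₂*t' := by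
          have h := ht'lb
          rw [div_le_iff₀ (by positivity)] at h
          nlinarith
        have h4 : 1 ≤ 2*(m:ℝ)*(c₂/(1+c₂))*t' := by
          rw [← mul_le_mul_iff_of_pos_right h1c₂, one_mul]
          calc (1+c₂) ≤ 2*(m:ℝ)*c₂*t' := h3
            _ = 2*(m:ℝ)*(c₂/(1+c₂))*t'*(1+c₂) := by
                field_simp
        have key : 2*r ≤ m * a^2 := by
          calc 2*r = 2*r*1 := (mul_one _).symm
            _ ≤ 2*r*(2*(m:ℝ)*(c₂/(1+c₂))*t') := by
                apply mul_le_mul_of_nonneg_left _ (by positivity)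
                linarith
            _ = (m:ℝ)*(4*(c₂/(1+c₂))*r*t') := by ring
            _ ≤ (m:ℝ)*a^2 := by
                apply mul_le_mul_of_nonneg_left h1 (le_of_lt hm')
        rw [div_le_iff₀ (by positivity)]
        nlinarith [key]
      have hofr : ENNReal.ofReal (1/2 : ℝ) = 2⁻¹ := by
        rw [one_div, ENNReal.ofReal_inv_of_pos two_pos, ENNReal.ofReal_ofNat]
      have hcompl : μZ {S' : Fin m → Z | r ≤ (1 + c₂) * (empRisk ℓ S' f + t')}ᶜ ≤ 2⁻¹ := by
        calc μZ {S' : Fin m → Z | r ≤ (1 + c₂) * (empRisk ℓ S' f + t')}ᶜ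
            ≤ μZ {S' | a ≤ |(m:ℝ)⁻¹ * ∑ i, ℓ f (S' i) - ∫ z, ℓ f z ∂D|} := by
              rw [hIr]
              exact measure_mono hsubset
          _ ≤ ENNReal.ofReal (r / (m * a^2)) := hbnd
          _ ≤ ENNReal.ofReal (1/2) := ENNReal.ofReal_le_ofReal hnum
          _ = 2⁻¹ := hofr
      have htot : μZ {S' : Fin m → Z | r ≤ (1 + c₂) * (empRisk ℓ S' f + t')}
          + μZ {S' : Fin m → Z | r ≤ (1 + c₂) * (empRisk ℓ S' f + t')}ᶜ = 1 := by
        rw [measure_add_measure_compl hCmeas, measure_univ]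
      have hone : (1:ℝ≥0∞) ≤ μZ {S' : Fin m → Z | r ≤ (1 + c₂) * (empRisk ℓ S' f + t')} + 2⁻¹ := by
        rw [← htot]
        exact add_le_add_right hcompl _
      calc (2⁻¹:ℝ≥0∞) = 1 - 2⁻¹ := ENNReal.one_sub_inv_two.symm
        _ ≤ μZ {S' | r ≤ (1 + c₂) * (empRisk ℓ S' f + t')} := tsub_le_iff_right.mpr hone
  -- STEP I
  have stepI : 2⁻¹ * μZ {S | t ≤ ⨆ f : F, (risk D ℓ f - (1 + c) * empRisk ℓ S f)}
      ≤ (μZ.prod μZ) {q : (Fin m → Z) × (Fin m → Z) |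
          t' ≤ ⨆ f : F, (empRisk ℓ q.2 f - (1 + c') * empRisk ℓ q.1 f)} := by
    apply slice_lower_bound
    intro S hS
    simp only [Set.mem_setOf_eq] at hS
    have hex : ∀ n : ℕ, ∃ f : F,
        t - 1/((n:ℝ)+1) < risk D ℓ f - (1 + c) * empRisk ℓ S f := by
      intro n
      have hlt : t - 1/((n:ℝ)+1) < t := by
        have : (0:ℝ) < 1/((n:ℝ)+1) := by positivity
        linarith
      exact exists_lt_of_lt_ciSup (lt_of_lt_of_le hlt hS)
    choose fn hfn using hex
    set Cn : ℕ → Set (Fin m → Z) := fun n =>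
      {S' | risk D ℓ (fn n) ≤ (1 + c₂) * (empRisk ℓ S' (fn n) + t')} with hCn
    have hCnmeas : ∀ n, MeasurableSet (Cn n) := fun n =>
      measurableSet_le measurable_const (((hempmeas (fn n)).add_const t').const_mul (1 + c₂))
    have hCnlb : ∀ n, (2⁻¹:ℝ≥0∞) ≤ μZ (Cn n) := fun n => hcheb (fn n)
    set U : ℕ → Set (Fin m → Z) := fun N => ⋃ n : ℕ, Cn (N + n) with hU
    have hUmeas : ∀ N, MeasurableSet (U N) := fun N => MeasurableSet.iUnion fun n => hCnmeas _
    have hUlb : ∀ N, (2⁻¹:ℝ≥0∞) ≤ μZ (U N) := fun N =>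
      le_trans (hCnlb N) (measure_mono (by
        intro x hx
        exact Set.mem_iUnion.mpr ⟨0, by simpa using hx⟩))
    have hanti : Antitone U := by
      intro N N' hNN' x hx
      rcases Set.mem_iUnion.mp hx with ⟨n, hn⟩
      exact Set.mem_iUnion.mpr ⟨N' - N + n, by
        rw [show N + (N' - N + n) = N' + n by omega]; exact hn⟩
    have hInt : (2⁻¹:ℝ≥0∞) ≤ μZ (⋂ N, U N) := by
      rw [hanti.measure_iInter (fun N => (hUmeas N).nullMeasurableSet)
        ⟨0, measure_ne_top _ _⟩]
      exact le_iInf hUlb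
    refine le_trans hInt (measure_mono ?_)
    intro S' hS'
    simp only [Set.mem_setOf_eq]
    show t' ≤ ⨆ f : F, (empRisk ℓ S' f - (1 + c') * empRisk ℓ S f)
    have hbdd : BddAbove (Set.range fun f : F =>
        empRisk ℓ S' f - (1 + c') * empRisk ℓ S f) := by
      refine ⟨1, ?_⟩
      rintro _ ⟨f, rfl⟩
      show empRisk ℓ S' f - (1 + c') * empRisk ℓ S f ≤ 1
      have h1 := hemp1 f S'
      have h0 := hemp0 f S
      nlinarith
    refine le_of_forall_pos_le_add ?_
    intro ε hε
    obtain ⟨N, hN⟩ := exists_nat_gt (1/(ε*(1+c₂)))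
    rcases Set.mem_iUnion.mp (Set.mem_iInter.mp hS' N) with ⟨n, hn⟩
    have h1 : risk D ℓ (fn (N+n)) ≤ (1 + c₂) * (empRisk ℓ S' (fn (N+n)) + t') := hn
    have h2 : t - 1/(((N+n:ℕ):ℝ)+1) < risk D ℓ (fn (N+n)) - (1 + c) * empRisk ℓ S (fn (N+n)) :=
      hfn (N+n)
    have hk1 : (0:ℝ) < ((N+n:ℕ):ℝ)+1 := by positivity
    have hprod : c₂ * c' * empRisk ℓ S (fn (N+n)) = (c - c₂ - c') * empRisk ℓ S (fn (N+n)) := by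
      rw [hccx']
    have hmul : (1+c₂)*t' - 1/(((N+n:ℕ):ℝ)+1)
        ≤ (1+c₂)*(empRisk ℓ S' (fn (N+n)) - (1+c') * empRisk ℓ S (fn (N+n))) := by
      nlinarith [h1, h2, hprod, ht'x]
    have hdiveq : (1+c₂)*(t' - 1/((((N+n:ℕ):ℝ)+1)*(1+c₂)))
        = (1+c₂)*t' - 1/(((N+n:ℕ):ℝ)+1) := by
      field_simp
    have hval : t' - 1/((((N+n:ℕ):ℝ)+1)*(1+c₂))
        ≤ empRisk ℓ S' (fn (N+n)) - (1+c') * empRisk ℓ S (fn (N+n)) := by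
      have := hmul
      rw [← hdiveq] at this
      exact le_of_mul_le_mul_left this h1c₂
    have hsup : t' - 1/((((N+n:ℕ):ℝ)+1)*(1+c₂))
        ≤ ⨆ f : F, (empRisk ℓ S' f - (1 + c') * empRisk ℓ S f) :=
      le_trans hval (le_ciSup hbdd (fn (N+n)))
    have hkN : (N:ℝ) ≤ ((N+n:ℕ):ℝ) := by exact_mod_cast Nat.le_add_right N n
    have hεk : 1/((((N+n:ℕ):ℝ)+1)*(1+c₂)) ≤ ε := by
      have hN1 : 1 < ε*(1+c₂)*((N:ℝ)+1) := by
        rw [div_lt_iff₀ (by positivity)] at hN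
        nlinarith
      rw [div_le_iff₀ (by positivity)]
      nlinarith [hε, h1c₂, hkN]
    linarith [hsup, hεk]
  -- STEP II
  set Rset := {p : (Fin m → Z) × (Fin m → Bool) | t' / 2 ≤ ⨆ f : F,
      ((1 + c' / 2) / m) *
        ∑ i, (rad (p.2 i) - (c' / 2) / (1 + c' / 2)) * ℓ f (p.1 i)} with hRset
  set B' := {q : (Fin m → Z) × (Fin m → Z) |
      t' ≤ ⨆ f : F, (empRisk ℓ q.2 f - (1 + c') * empRisk ℓ q.1 f)} with hB'
  set E := toMeasurable (μZ.prod νB) Rset with hE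
  have hEmeas : MeasurableSet E := measurableSet_toMeasurable _ _
  have hG1bdd : ∀ (S : Fin m → Z) (b : Fin m → Bool),
      BddAbove (Set.range fun f : F =>
        ((1 + c' / 2) / m) * ∑ i, (rad (b i) - (c' / 2) / (1 + c' / 2)) * ℓ f (S i)) := by
    intro S b
    refine ⟨1 + c'/2, ?_⟩
    rintro _ ⟨f, rfl⟩
    show ((1 + c' / 2) / m) * ∑ i, (rad (b i) - (c' / 2) / (1 + c' / 2)) * ℓ f (S i) ≤ 1 + c'/2
    have hsum : ∑ i, (rad (b i) - (c'/2)/(1+c'/2)) * ℓ f (S i) ≤ (m:ℝ) := by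
      calc ∑ i, (rad (b i) - (c'/2)/(1+c'/2)) * ℓ f (S i)
          ≤ ∑ _i : Fin m, (1:ℝ) := by
            refine Finset.sum_le_sum fun i _ => ?_
            have hr1 : rad (b i) ≤ 1 := by unfold rad; split <;> norm_num
            have h0 := (hℓ f (S i)).1
            have h1 := (hℓ f (S i)).2
            nlinarith [hκ0]
        _ = m := by simp
    calc ((1 + c'/2)/m) * ∑ i, (rad (b i) - (c'/2)/(1+c'/2)) * ℓ f (S i)
        ≤ ((1 + c'/2)/m) * m := mul_le_mul_of_nonneg_left hsum (by positivity)
      _ = 1 + c'/2 := by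
          field_simp
  have hkey : ∀ b : Fin m → Bool, (μZ.prod μZ) B'
      ≤ μZ {S | (S, b) ∈ E} + μZ {S | (S, fun i => !(b i)) ∈ E} := by
    intro b
    set eb := fun q : (Fin m → Z) × (Fin m → Z) =>
      ((fun i => if b i then q.1 i else q.2 i, fun i => if b i then q.2 i else q.1 i)
        : (Fin m → Z) × (Fin m → Z)) with heb
    have hmp : MeasurePreserving eb (μZ.prod μZ) (μZ.prod μZ) := by
      rw [hμZ]
      exact eb_measure_preserving D m b
    have hinv : ∀ q, eb (eb q) = q := by
      intro q
      refine Prod.ext ?_ ?_ <;> funext i <;> by_cases hb : b i <;> simp [heb, hb]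
    have hBeq : eb ⁻¹' (eb ⁻¹' B') = B' := by
      ext q
      simp only [Set.mem_preimage, hinv q]
    have h1 : (μZ.prod μZ) B' ≤ (μZ.prod μZ) (eb ⁻¹' B') := by
      have h := outer_preimage_le hmp (eb ⁻¹' B')
      rw [hBeq] at h
      exact h
    have hident : ∀ (f : F) (q : (Fin m → Z) × (Fin m → Z)),
        empRisk ℓ (eb q).2 f - (1 + c') * empRisk ℓ (eb q).1 f
          = ((1 + c' / 2) / m) * ∑ i, (rad (b i) - (c' / 2) / (1 + c' / 2)) * ℓ f (q.2 i)
            + ((1 + c' / 2) / m) * ∑ i, (rad (!(b i)) - (c' / 2) / (1 + c' / 2)) * ℓ f (q.1 i) := by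
      intro f q
      have e1 : empRisk ℓ (eb q).2 f - (1 + c') * empRisk ℓ (eb q).1 f
          = (m:ℝ)⁻¹ * ∑ i, (ℓ f ((eb q).2 i) - (1 + c') * ℓ f ((eb q).1 i)) := by
        unfold empRisk
        rw [Finset.sum_sub_distrib, ← Finset.mul_sum]
        ring
      rw [e1]
      have e2 : ∀ i : Fin m, ℓ f ((eb q).2 i) - (1 + c') * ℓ f ((eb q).1 i)
          = (1 + c'/2) * ((rad (b i) - (c'/2)/(1+c'/2)) * ℓ f (q.2 i))
            + (1 + c'/2) * ((rad (!(b i)) - (c'/2)/(1+c'/2)) * ℓ f (q.1 i)) := by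
        intro i
        have halg := rad_alg hc'pos (b i) (ℓ f (q.1 i)) (ℓ f (q.2 i))
        have hv2 : ℓ f ((eb q).2 i) = if b i then ℓ f (q.2 i) else ℓ f (q.1 i) := by
          rw [heb]; exact apply_ite (ℓ f) _ _ _
        have hv1 : ℓ f ((eb q).1 i) = if b i then ℓ f (q.1 i) else ℓ f (q.2 i) := by
          rw [heb]; exact apply_ite (ℓ f) _ _ _
        rw [hv2, hv1]
        exact halg
      rw [Finset.sum_congr rfl fun i _ => e2 i, Finset.sum_add_distrib,
        ← Finset.mul_sum, ← Finset.mul_sum]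
      ring
    have hincl : eb ⁻¹' B' ⊆
        {p : (Fin m → Z) × (Fin m → Z) | t'/2 ≤ ⨆ f : F,
          ((1 + c' / 2) / m) * ∑ i, (rad (b i) - (c' / 2) / (1 + c' / 2)) * ℓ f (p.2 i)}
        ∪ {p : (Fin m → Z) × (Fin m → Z) | t'/2 ≤ ⨆ f : F,
          ((1 + c' / 2) / m) * ∑ i, (rad ((fun i => !(b i)) i) - (c' / 2) / (1 + c' / 2)) * ℓ f (p.1 i)} := by
      intro q hq
      simp only [Set.mem_preimage, hB', Set.mem_setOf_eq] at hq
      by_contra hcon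
      simp only [Set.mem_union, Set.mem_setOf_eq, not_or, not_le] at hcon
      obtain ⟨hA, hB⟩ := hcon
      have hlt : (⨆ f : F, (empRisk ℓ (eb q).2 f - (1 + c') * empRisk ℓ (eb q).1 f)) < t' := by
        refine lt_of_le_of_lt (ciSup_le fun f => ?_) (show
          (⨆ f : F, ((1 + c' / 2) / m) * ∑ i, (rad (b i) - (c' / 2) / (1 + c' / 2)) * ℓ f (q.2 i))
          + (⨆ f : F, ((1 + c' / 2) / m) * ∑ i, (rad (!(b i)) - (c' / 2) / (1 + c' / 2)) * ℓ f (q.1 i))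
          < t' by linarith)
        rw [hident f q]
        exact add_le_add (le_ciSup (hG1bdd q.2 b) f) (le_ciSup (hG1bdd q.1 (fun i => !(b i))) f)
      exact absurd hq (not_le.mpr hlt)
    calc (μZ.prod μZ) B' ≤ (μZ.prod μZ) (eb ⁻¹' B') := h1
      _ ≤ (μZ.prod μZ) {p : (Fin m → Z) × (Fin m → Z) | t'/2 ≤ ⨆ f : F,
            ((1 + c' / 2) / m) * ∑ i, (rad (b i) - (c' / 2) / (1 + c' / 2)) * ℓ f (p.2 i)}
          + (μZ.prod μZ) {p : (Fin m → Z) × (Fin m → Z) | t'/2 ≤ ⨆ f : F,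
            ((1 + c' / 2) / m) * ∑ i, (rad ((fun i => !(b i)) i) - (c' / 2) / (1 + c' / 2)) * ℓ f (p.1 i)} :=
          le_trans (measure_mono hincl) (measure_union_le _ _)
      _ ≤ μZ {S | t'/2 ≤ ⨆ f : F,
            ((1 + c' / 2) / m) * ∑ i, (rad (b i) - (c' / 2) / (1 + c' / 2)) * ℓ f (S i)}
          + μZ {S | t'/2 ≤ ⨆ f : F,
            ((1 + c' / 2) / m) * ∑ i, (rad ((fun i => !(b i)) i) - (c' / 2) / (1 + c' / 2)) * ℓ f (S i)} := by
          exact add_le_add (cylinder_right_le _ _ _) (cylinder_left_le _ _ _)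
      _ ≤ μZ {S | (S, b) ∈ E} + μZ {S | (S, fun i => !(b i)) ∈ E} := by
          refine add_le_add (measure_mono ?_) (measure_mono ?_) <;>
            · intro S hS
              exact subset_toMeasurable _ _ hS
  have hmeash : Measurable (fun b : Fin m → Bool => μZ {S | (S, b) ∈ E}) :=
    measurable_measure_prodMk_right hEmeas
  have hnegmp : MeasurePreserving (fun b : Fin m → Bool => fun i => !(b i)) νB νB := by
    rw [hνB]
    exact measurePreserving_pi (fun _ : Fin m => radMeasure) (fun _ : Fin m => radMeasure)
      (f := fun _ x => !x) (fun i => ⟨measurable_of_countable _, radMeasure_map_not⟩)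
  have stepII : (μZ.prod μZ) B' ≤ 2 * (μZ.prod νB) Rset := by
    calc (μZ.prod μZ) B' = ∫⁻ _b, (μZ.prod μZ) B' ∂νB := by
          rw [lintegral_const, measure_univ, mul_one]
      _ ≤ ∫⁻ b, (μZ {S | (S, b) ∈ E} + μZ {S | (S, fun i => !(b i)) ∈ E}) ∂νB :=
          lintegral_mono fun b => hkey b
      _ = (∫⁻ b, μZ {S | (S, b) ∈ E} ∂νB)
          + ∫⁻ b, μZ {S | (S, fun i => !(b i)) ∈ E} ∂νB := lintegral_add_left hmeash _
      _ = (∫⁻ b, μZ {S | (S, b) ∈ E} ∂νB) + ∫⁻ b, μZ {S | (S, b) ∈ E} ∂νB := by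
          rw [hnegmp.lintegral_comp hmeash]
      _ = 2 * ∫⁻ b, μZ {S | (S, b) ∈ E} ∂νB := (two_mul _).symm
      _ = 2 * (μZ.prod νB) E := by
          rw [Measure.prod_apply_symm hEmeas]
          rfl
      _ = 2 * (μZ.prod νB) Rset := by rw [hE, measure_toMeasurable]
  -- combine
  have hx : μZ {S | t ≤ ⨆ f : F, (risk D ℓ f - (1 + c) * empRisk ℓ S f)}
      ≤ 2 * ((μZ.prod μZ) B') := by
    calc μZ {S | t ≤ ⨆ f : F, (risk D ℓ f - (1 + c) * empRisk ℓ S f)}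
        = 2 * (2⁻¹ * μZ {S | t ≤ ⨆ f : F, (risk D ℓ f - (1 + c) * empRisk ℓ S f)}) := by
          rw [← mul_assoc, ENNReal.mul_inv_cancel two_ne_zero (by norm_num), one_mul]
      _ ≤ 2 * ((μZ.prod μZ) B') := mul_le_mul_right stepI _
  calc 4⁻¹ * μZ {S | t ≤ ⨆ f : F, (risk D ℓ f - (1 + c) * empRisk ℓ S f)}
      ≤ 4⁻¹ * (2 * (2 * (μZ.prod νB) Rset)) :=
        mul_le_mul_right (le_trans hx (mul_le_mul_right stepII _)) _
    _ = (μZ.prod νB) Rset := by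
        rw [← mul_assoc, ← mul_assoc, show (4:ℝ≥0∞)⁻¹ * 2 * 2 = 1 by
          rw [mul_assoc, show (2:ℝ≥0∞) * 2 = 4 by norm_num]
          exact ENNReal.inv_mul_cancel (by norm_num) (by norm_num), one_mul]
end

section
/- (Shifted-flatness inequality.) Let f : Z → [0,1] be measurable, let h ∈ (0,1] and c₂ > 0 be constants, and let t be a real number with t ≥ (1+c₂)(1+c₂h²) / (m·c₂·h²). Then P_S( L_D(f) − (1+c₂)·L̂_S(f) + c₂(1−h²)·L̂_S(f²) ≥ t/2 ) ≤ 1/2, where the probability is over the i.i.d. sample S = (z_1,…,z_m) ∼ D^m and f² denotes the pointwise square of f. -/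
open MeasureTheory Real

/-- Empirical risk of a `[0,1]`-valued function `f` on a sample `S` of size `m`. -/
noncomputable def empRisk' {Z : Type*} {m : ℕ} (S : Fin m → Z) (f : Z → ℝ) : ℝ :=
  (m : ℝ)⁻¹ * ∑ i, f (S i)

/-- Risk (expected value) of `f` under the data distribution `D`. -/
noncomputable def risk' {Z : Type*} [MeasurableSpace Z] (D : Measure Z) (f : Z → ℝ) : ℝ :=
  ∫ z, f z ∂D

section Aux
variable {Z : Type*} [MeasurableSpace Z] (D : Measure Z) [IsProbabilityMeasure D] {m : ℕ}

lemma map_eval_pi' (i : Fin m) :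
    (Measure.pi fun _ : Fin m => D).map (Function.eval i) = D := by
  ext A hA
  rw [Measure.map_apply (measurable_pi_apply i) hA]
  have hpre : (Function.eval i) ⁻¹' A
      = Set.pi Set.univ (Function.update (fun _ : Fin m => (Set.univ : Set Z)) i A) := by
    ext x
    constructor
    · intro hx j _
      rcases eq_or_ne j i with rfl | hj
      · simpa using hx
      · simp [Function.update_apply, hj]
    · intro hx
      have := hx i (Set.mem_univ i)
      simpa using this
  rw [hpre, Measure.pi_pi]
  rw [Finset.prod_eq_single i (fun j _ hj => by simp [Function.update_apply, hj])
    (fun hi => absurd (Finset.mem_univ i) hi)]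
  simp

lemma integral_eval_pi (i : Fin m) (φ : Z → ℝ) (hφ : AEStronglyMeasurable φ D) :
    ∫ S, φ (S i) ∂(Measure.pi fun _ : Fin m => D) = ∫ z, φ z ∂D := by
  calc ∫ S, φ (S i) ∂(Measure.pi fun _ : Fin m => D)
      = ∫ z, φ z ∂((Measure.pi fun _ : Fin m => D).map (Function.eval i)) :=
        (integral_map (measurable_pi_apply i).aemeasurable
          (by rw [map_eval_pi']; exact hφ)).symm
    _ = ∫ z, φ z ∂D := by rw [map_eval_pi']

lemma iIndepFun_eval_pi :
    ProbabilityTheory.iIndepFun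
      (fun (i : Fin m) (S : Fin m → Z) => S i) (Measure.pi fun _ : Fin m => D) := by
  classical
  rw [ProbabilityTheory.iIndepFun_iff_measure_inter_preimage_eq_mul]
  intro s sets hsets
  have h1 : (⋂ i ∈ s, (fun S : Fin m → Z => S i) ⁻¹' sets i)
      = Set.pi Set.univ (fun i => if i ∈ s then sets i else Set.univ) := by
    ext x
    simp only [Set.mem_iInter, Set.mem_preimage, Set.mem_pi, Set.mem_univ, forall_true_left]
    constructor
    · intro hx j
      by_cases hj : j ∈ s <;> simp [hj, hx j]
    · intro hx j hj
      have := hx j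
      simpa [hj] using this
  rw [h1, Measure.pi_pi]
  have h2 : ∀ i ∈ s, (Measure.pi fun _ : Fin m => D) ((fun S : Fin m → Z => S i) ⁻¹' sets i)
      = D (sets i) := by
    intro i hi
    have e := Measure.map_apply (μ := Measure.pi fun _ : Fin m => D)
      (measurable_pi_apply i) (hsets i hi)
    rw [map_eval_pi' D i] at e
    exact e.symm
  calc ∏ i : Fin m, D (if i ∈ s then sets i else Set.univ)
      = ∏ i : Fin m, (if i ∈ s then D (sets i) else 1) := by
        refine Finset.prod_congr rfl fun i _ => ?_
        by_cases hi : i ∈ s <;> simp [hi]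
    _ = ∏ i ∈ s, D (sets i) := by
        rw [Finset.prod_ite_mem Finset.univ s, Finset.univ_inter]
    _ = ∏ i ∈ s, (Measure.pi fun _ : Fin m => D) ((fun S : Fin m → Z => S i) ⁻¹' sets i) :=
        Finset.prod_congr rfl fun i hi => (h2 i hi).symm

end Aux

set_option maxHeartbeats 1000000 in
open ProbabilityTheory in
/-- The shifted-flatness inequality. -/
theorem stmt9 {Z : Type*} [MeasurableSpace Z]
    (D : Measure Z) [IsProbabilityMeasure D]
    (f : Z → ℝ) (hf : ∀ z, f z ∈ Set.Icc (0 : ℝ) 1) (hfm : Measurable f)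
    (m : ℕ) (hm : 0 < m)
    (h c₂ : ℝ) (hh : h ∈ Set.Ioc (0 : ℝ) 1) (hc₂ : 0 < c₂)
    (t : ℝ) (ht : (1 + c₂) * (1 + c₂ * h ^ 2) / (m * c₂ * h ^ 2) ≤ t) :
    (Measure.pi fun _ : Fin m => D)
        {S | t / 2 ≤
          risk' D f - (1 + c₂) * empRisk' S f + c₂ * (1 - h ^ 2) * empRisk' S (fun z => f z ^ 2)}
      ≤ 1 / 2 := by
  classical
  obtain ⟨hh0, hh1⟩ := hh
  set P : Measure (Fin m → Z) := Measure.pi fun _ : Fin m => D with hP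
  set g : Z → ℝ := fun z => (1 + c₂) * f z - c₂ * (1 - h ^ 2) * f z ^ 2 with hg
  have hgm : Measurable g := by fun_prop
  have hm0 : (0 : ℝ) < m := by exact_mod_cast hm
  -- pointwise bounds on g
  have hh2 : 0 ≤ 1 - h ^ 2 := by nlinarith
  have hg0 : ∀ z, 0 ≤ g z := fun z => by
    have h1 := (hf z).1; have h2 := (hf z).2
    have hf2 : f z ^ 2 ≤ f z := by nlinarith
    simp only [hg]
    nlinarith [mul_nonneg (mul_nonneg hc₂.le (sq_nonneg h)) (sq_nonneg (f z)),
      mul_le_mul_of_nonneg_left hf2 hc₂.le]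
  have hgub : ∀ z, g z ≤ 1 + c₂ := fun z => by
    have h1 := (hf z).1; have h2 := (hf z).2
    simp only [hg]
    nlinarith [mul_nonneg (mul_nonneg hc₂.le hh2) (sq_nonneg (f z))]
  have hgf : ∀ z, (1 + c₂ * h ^ 2) * f z ≤ g z := fun z => by
    have h1 := (hf z).1; have h2 := (hf z).2
    have hf2 : 0 ≤ f z - f z ^ 2 := by nlinarith
    simp only [hg]
    nlinarith [mul_nonneg (mul_nonneg hc₂.le hh2) hf2]
  have hgsq : ∀ z, g z ^ 2 ≤ (1 + c₂) * g z := fun z => by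
    nlinarith [hg0 z, hgub z]
  -- moments over D
  set μf : ℝ := ∫ z, f z ∂D with hμf
  set Eg : ℝ := ∫ z, g z ∂D with hEg
  set Vg : ℝ := ProbabilityTheory.variance g D with hVg
  have hmemf : MemLp f 2 D :=
    MemLp.of_bound hfm.aestronglyMeasurable 1
      (Filter.Eventually.of_forall fun z => by
        rw [norm_eq_abs, abs_le]; exact ⟨by linarith [(hf z).1], (hf z).2⟩)
  have hmemg : MemLp g 2 D :=
    MemLp.of_bound hgm.aestronglyMeasurable (1 + c₂)
      (Filter.Eventually.of_forall fun z => by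
        rw [norm_eq_abs, abs_le]; exact ⟨by linarith [hg0 z], hgub z⟩)
  have hfi : Integrable f D := hmemf.integrable one_le_two
  have hgi : Integrable g D := hmemg.integrable one_le_two
  have hgsqi : Integrable (fun z => g z ^ 2) D := hmemg.integrable_sq
  have hμf0 : 0 ≤ μf := integral_nonneg fun z => (hf z).1
  have hEgge : (1 + c₂ * h ^ 2) * μf ≤ Eg := by
    rw [hμf, hEg, ← integral_const_mul]
    exact integral_mono (hfi.const_mul _) hgi hgf
  set d : ℝ := Eg - μf with hd
  have hd0 : 0 ≤ d := by
    nlinarith [hEgge, mul_nonneg (mul_nonneg hc₂.le (sq_nonneg h)) hμf0]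
  have hdge : c₂ * h ^ 2 * μf ≤ d := by nlinarith [hEgge]
  have hEgd : Eg = d + μf := by rw [hd]; ring
  have hVgle : Vg ≤ (1 + c₂) * Eg := by
    rw [hVg, variance_eq_sub hmemg]
    have h1 : ∫ z, (g z) ^ 2 ∂D ≤ (1 + c₂) * Eg := by
      rw [hEg, ← integral_const_mul]
      exact integral_mono hgsqi (hgi.const_mul _) hgsq
    have h2 : (0:ℝ) ≤ (∫ z, g z ∂D) ^ 2 := sq_nonneg _
    calc (∫ z, (g ^ 2) z ∂D) - (∫ z, g z ∂D) ^ 2 ≤ ∫ z, (g z) ^ 2 ∂D := by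
          simp only [Pi.pow_apply]; linarith
      _ ≤ (1 + c₂) * Eg := h1
  have ht0 : 0 < t :=
    lt_of_lt_of_le (by positivity) ht
  -- the sum variable
  set X : Fin m → (Fin m → Z) → ℝ := fun i S => g (S i) with hX
  have hXmem : ∀ i, MemLp (X i) 2 P :=
    fun i => MemLp.of_bound ((hgm.comp (measurable_pi_apply i)).aestronglyMeasurable) (1 + c₂)
      (Filter.Eventually.of_forall fun S => by
        rw [norm_eq_abs, abs_le]; exact ⟨by linarith [hg0 (S i)], hgub (S i)⟩)
  have hXint : ∀ i, ∫ S, X i S ∂P = Eg := fun i =>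
    integral_eval_pi D i g hgm.aestronglyMeasurable
  have hXvar : ∀ i, ProbabilityTheory.variance (X i) P = Vg := by
    intro i
    rw [variance_eq_sub (hXmem i), hVg, variance_eq_sub hmemg]
    have e1 : ∫ S, (X i ^ 2) S ∂P = ∫ z, (g ^ 2) z ∂D := by
      simp only [Pi.pow_apply]
      exact integral_eval_pi D i (fun z => g z ^ 2) (hgm.pow_const 2).aestronglyMeasurable
    rw [e1, hXint i, hEg]
  set Y : (Fin m → Z) → ℝ := ∑ i : Fin m, X i with hY
  have hYmem : MemLp Y 2 P := memLp_finset_sum' _ fun i _ => hXmem i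
  have hYapp : ∀ S, Y S = ∑ i : Fin m, g (S i) := fun S => by
    simp [hY, Finset.sum_apply, hX]
  have hindep : iIndepFun
      (fun (i : Fin m) (S : Fin m → Z) => S i) P := iIndepFun_eval_pi D
  have hindep' : iIndepFun X P := by
    have := hindep.comp (fun _ => g) (fun _ => hgm)
    exact this
  have hYvar : ProbabilityTheory.variance Y P = m * Vg := by
    rw [hY, ProbabilityTheory.IndepFun.variance_sum (fun i _ => hXmem i)
      (fun i _ j _ hij => hindep'.indepFun hij)]
    simp [hXvar]
  have hYint : ∫ S, Y S ∂P = m * Eg := by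
    have e : ∫ S, Y S ∂P = ∑ i : Fin m, ∫ S, X i S ∂P := by
      simp only [hY, Finset.sum_apply]
      exact integral_finset_sum _ fun i _ => (hXmem i).integrable one_le_two
    rw [e]
    simp [hXint]
  set c : ℝ := m * (t / 2 + d) with hc
  have hcpos : 0 < c := by positivity
  -- event inclusion
  have hsub : {S : Fin m → Z | t / 2 ≤
      risk' D f - (1 + c₂) * empRisk' S f + c₂ * (1 - h ^ 2) * empRisk' S (fun z => f z ^ 2)}
      ⊆ {S | c ≤ |Y S - ∫ S', Y S' ∂P|} := by
    intro S hS
    simp only [Set.mem_setOf_eq] at hS ⊢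
    rw [hYint]
    set A : ℝ := ∑ i : Fin m, f (S i) with hA
    set B : ℝ := ∑ i : Fin m, f (S i) ^ 2 with hB
    have hYS : Y S = (1 + c₂) * A - c₂ * (1 - h ^ 2) * B := by
      rw [hYapp S, hg]
      simp only [hA, hB]
      rw [Finset.mul_sum, Finset.mul_sum, ← Finset.sum_sub_distrib]
    have hSm : t / 2 ≤ μf - (1 + c₂) * ((m:ℝ)⁻¹ * A) + c₂ * (1 - h ^ 2) * ((m:ℝ)⁻¹ * B) := by
      simpa [risk', empRisk', hμf, hA, hB] using hS
    have e0 : (m:ℝ)⁻¹ * Y S = (1 + c₂) * ((m:ℝ)⁻¹ * A) - c₂ * (1 - h ^ 2) * ((m:ℝ)⁻¹ * B) := by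
      rw [hYS]; ring
    have e1 : (m:ℝ)⁻¹ * Y S ≤ μf - t / 2 := by linarith
    have e2 : Y S ≤ m * (μf - t / 2) := by
      have e3 : (m:ℝ) * ((m:ℝ)⁻¹ * Y S) = Y S := by
        field_simp
      nlinarith [mul_le_mul_of_nonneg_left e1 hm0.le]
    refine le_abs.mpr (Or.inr ?_)
    have e4 : Y S - m * Eg ≤ -c := by
      rw [hc, hd]; nlinarith [e2]
    linarith
  -- Chebyshev
  have hcheb := ProbabilityTheory.meas_ge_le_variance_div_sq (μ := P) hYmem hcpos
  have hmain : (Measure.pi fun _ : Fin m => D)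
      {S | t / 2 ≤ risk' D f - (1 + c₂) * empRisk' S f
        + c₂ * (1 - h ^ 2) * empRisk' S (fun z => f z ^ 2)}
      ≤ ENNReal.ofReal (ProbabilityTheory.variance Y P / c ^ 2) :=
    le_trans (measure_mono hsub) hcheb
  refine le_trans hmain ?_
  -- numeric bound
  have hnum : ProbabilityTheory.variance Y P / c ^ 2 ≤ 1 / 2 := by
    rw [hYvar, div_le_iff₀ (by positivity)]
    have hE : (1 + c₂) * (1 + c₂ * h ^ 2) ≤ m * t * (c₂ * h ^ 2) := by
      rw [div_le_iff₀ (by positivity)] at ht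
      nlinarith [ht]
    have hEgle : Eg * (c₂ * h ^ 2) ≤ (1 + c₂ * h ^ 2) * d := by
      have e : Eg * (c₂ * h ^ 2) = c₂ * h ^ 2 * μf + c₂ * h ^ 2 * d := by rw [hEgd]; ring
      rw [e]; nlinarith [hdge, mul_nonneg (mul_nonneg hc₂.le (sq_nonneg h)) hd0]
    have h1 : Vg * (c₂ * h ^ 2) ≤ (1 + c₂) * (1 + c₂ * h ^ 2) * d := by
      nlinarith [mul_le_mul_of_nonneg_right hVgle (by positivity : (0:ℝ) ≤ c₂ * h ^ 2),
        mul_le_mul_of_nonneg_left hEgle (by positivity : (0:ℝ) ≤ 1 + c₂)]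
    have h2 : (1 + c₂) * (1 + c₂ * h ^ 2) * d ≤ m * t * (c₂ * h ^ 2) * d :=
      mul_le_mul_of_nonneg_right hE hd0
    have h3 : Vg ≤ m * t * d := by
      have hch : 0 < c₂ * h ^ 2 := by positivity
      have h12 : Vg * (c₂ * h ^ 2) ≤ (m * t * d) * (c₂ * h ^ 2) := by
        nlinarith [le_trans h1 h2]
      exact le_of_mul_le_mul_right h12 hch
    have h4 : 2 * t * d ≤ (t / 2 + d) ^ 2 := by nlinarith [sq_nonneg (t / 2 - d)]
    rw [hc]
    have k1 : (m:ℝ) * Vg ≤ (m:ℝ) * ((m:ℝ) * t * d) := mul_le_mul_of_nonneg_left h3 hm0.le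
    have k2 : ((m:ℝ) ^ 2 / 2) * (2 * t * d) ≤ ((m:ℝ) ^ 2 / 2) * ((t / 2 + d) ^ 2) :=
      mul_le_mul_of_nonneg_left h4 (by positivity)
    have k3 : (m:ℝ) * ((m:ℝ) * t * d) = ((m:ℝ) ^ 2 / 2) * (2 * t * d) := by ring
    have k4 : 1 / 2 * ((m:ℝ) * (t / 2 + d)) ^ 2 = ((m:ℝ) ^ 2 / 2) * ((t / 2 + d) ^ 2) := by ring
    calc (m:ℝ) * Vg ≤ (m:ℝ) * ((m:ℝ) * t * d) := k1
      _ = ((m:ℝ) ^ 2 / 2) * (2 * t * d) := k3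
      _ ≤ ((m:ℝ) ^ 2 / 2) * ((t / 2 + d) ^ 2) := k2
      _ = 1 / 2 * ((m:ℝ) * (t / 2 + d)) ^ 2 := k4.symm
  calc ENNReal.ofReal (ProbabilityTheory.variance Y P / c ^ 2)
      ≤ ENNReal.ofReal (1 / 2) := ENNReal.ofReal_le_ofReal hnum
    _ = 1 / 2 := by
        rw [ENNReal.ofReal_div_of_pos (by norm_num)]
        norm_num
end

section
/- Let h ∈ (0,1] and c, c₂ be constants with h²c > c₂ > 0, and set C = (h²c − c₂) / ( 2(1+h²c)(1+c₂) ). Let λ > 0 satisfy 0 < λ/m < C. Let X_1,…,X_m be independent Bernoulli ({0,1}-valued) random variables, let ε_1,…,ε_m be i.i.d. Rademacher random variables independent of the X_i, and define ε_i'' = ε_i·(c+c₂)/2 − (c−c₂)/2. Then for any random variables Y_1,…,Y_m taking values in [0,1]: E_{ε} E_{X} E_{Y|X,ε} [ exp( (λ/m)·Σ_{i=1}^m X_i·( (ε_i + ε_i'') − ε_i''·(1−h²)·Y_i ) ) ] ≤ 1. -/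
open MeasureTheory Real

/-- A Bernoulli (`{0,1}`-valued) variable realized from a coin: `1` on `true`, `0` on `false`. -/
noncomputable def ind (b : Bool) : ℝ := if b then 1 else 0

instance inst_s11 : IsProbabilityMeasure radMeasure := by
  unfold radMeasure; infer_instance

theorem key1 (A B t : ℝ) (hA : 0 < A) (hAB : A < B) (ht : 0 ≤ t)
    (htC : t ≤ (B - A) / (2 * A * B)) : exp (t * A) + exp (-(t * B)) ≤ 2 := by
  have hB : 0 < B := hA.trans hAB
  have htC' : t * (2 * A * B) ≤ B - A := by
    rwa [← le_div_iff₀ (by positivity)]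
  have h1 : 0 < 1 - t * A := by nlinarith
  have h2 : 0 < 1 + t * B := by nlinarith
  have e1 : exp (t * A) ≤ 1 / (1 - t * A) := by
    rw [le_div_iff₀ h1]
    calc exp (t * A) * (1 - t * A) ≤ exp (t * A) * exp (-(t * A)) := by
          have := Real.add_one_le_exp (-(t * A))
          nlinarith [Real.exp_pos (t * A)]
      _ = 1 := by rw [← Real.exp_add]; simp
  have e2 : exp (-(t * B)) ≤ 1 / (1 + t * B) := by
    rw [le_div_iff₀ h2]
    calc exp (-(t * B)) * (1 + t * B) ≤ exp (-(t * B)) * exp (t * B) := by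
          have := Real.add_one_le_exp (t * B)
          nlinarith [Real.exp_pos (-(t * B))]
      _ = 1 := by rw [← Real.exp_add]; simp
  have e3 : 1 / (1 - t * A) + 1 / (1 + t * B) ≤ 2 := by
    rw [div_add_div _ _ h1.ne' h2.ne', div_le_iff₀ (by positivity)]
    nlinarith [mul_le_mul_of_nonneg_left htC' ht]
  linarith

/-- The key exponential-moment bound with two scaled and shifted Rademacher variables and
arbitrary `[0,1]`-valued random variables `Y i` (which may depend on the `X`'s and `ε`'s).
The `X i` are independent Bernoulli variables (with arbitrary parameters `p i`) and the `ε i`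
are i.i.d. Rademacher variables independent of the `X i`, realized on the canonical product
space `(Fin m → Bool) × (Fin m → Bool)`. -/
theorem stmt11 (m : ℕ) (hm : 0 < m)
    (h c c₂ : ℝ) (hh : h ∈ Set.Ioc (0 : ℝ) 1) (hc₂ : 0 < c₂) (hc : c₂ < h ^ 2 * c)
    (C lam : ℝ) (hC : C = (h ^ 2 * c - c₂) / (2 * (1 + h ^ 2 * c) * (1 + c₂)))
    (hlam0 : 0 < lam) (hlam : lam / m < C)
    (p : Fin m → ENNReal) (hp : ∀ i, p i ≤ 1)
    (Y : Fin m → (Fin m → Bool) × (Fin m → Bool) → ℝ)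
    (hY : ∀ i ω, Y i ω ∈ Set.Icc (0 : ℝ) 1)
    (hYm : ∀ i, Measurable (Y i)) :
    (∫ ω : (Fin m → Bool) × (Fin m → Bool),
        Real.exp ((lam / m) * ∑ i,
          ind (ω.1 i) *
            ((rad (ω.2 i) + (rad (ω.2 i) * ((c + c₂) / 2) - (c - c₂) / 2)) -
              (rad (ω.2 i) * ((c + c₂) / 2) - (c - c₂) / 2) * (1 - h ^ 2) * Y i ω))
      ∂((Measure.pi fun i => (PMF.bernoulli (p i).toNNReal (by simpa using ENNReal.toNNReal_mono ENNReal.one_ne_top (hp i))).toMeasure).prod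
          (Measure.pi fun _ : Fin m => radMeasure))) ≤ 1 := by
  obtain ⟨hh0, hh1⟩ := hh
  set t : ℝ := lam / m with ht_def
  have ht0 : 0 < t := div_pos hlam0 (by exact_mod_cast hm)
  set A : ℝ := 1 + c₂ with hA_def
  set B : ℝ := 1 + h ^ 2 * c with hB_def
  have hA : 0 < A := by positivity
  have hAB : A < B := by simp only [hA_def, hB_def]; linarith
  have hB : 0 < B := hA.trans hAB
  have hcpos : 0 < c := by nlinarith
  have hh2 : 0 ≤ 1 - h ^ 2 := by nlinarith
  have htC : t ≤ (B - A) / (2 * A * B) := by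
    have hCeq : C = (B - A) / (2 * A * B) := by rw [hC, hA_def, hB_def]; ring
    rw [← hCeq]; exact hlam.le
  set a : Bool → ℝ := fun b => if b then A else -B with ha_def
  set ν : Fin m → Measure Bool := fun i => (PMF.bernoulli (p i).toNNReal (by simpa using ENNReal.toNNReal_mono ENNReal.one_ne_top (hp i))).toMeasure with hν_def
  -- pointwise bound
  have hpt : ∀ ω : (Fin m → Bool) × (Fin m → Bool),
      Real.exp (t * ∑ i,
          ind (ω.1 i) *
            ((rad (ω.2 i) + (rad (ω.2 i) * ((c + c₂) / 2) - (c - c₂) / 2)) -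
              (rad (ω.2 i) * ((c + c₂) / 2) - (c - c₂) / 2) * (1 - h ^ 2) * Y i ω)) ≤
        ∏ i, Real.exp (t * (ind (ω.1 i) * a (ω.2 i))) := by
    intro ω
    rw [← Real.exp_sum, ← Finset.mul_sum]
    apply Real.exp_le_exp.mpr
    apply mul_le_mul_of_nonneg_left _ ht0.le
    apply Finset.sum_le_sum
    intro i _
    have hind : (0:ℝ) ≤ ind (ω.1 i) := by cases hb : ω.1 i <;> simp [ind]
    apply mul_le_mul_of_nonneg_left _ hind
    obtain ⟨hY0, hY1⟩ := hY i ω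
    cases hb : ω.2 i <;> simp [rad, ha_def, hA_def, hB_def] <;>
      nlinarith [mul_nonneg (mul_nonneg hc₂.le hh2) hY0,
        mul_nonneg (mul_nonneg hcpos.le hh2) (sub_nonneg.mpr hY1)]
  have hkey : Real.exp (t * A) + Real.exp (-(t * B)) ≤ 2 := key1 A B t hA hAB ht0.le htC
  -- each single-coordinate factor
  have hfac : ∀ i, ∑ b1 : Bool, ∑ b2 : Bool,
      (ν i {b1}).toReal * (radMeasure {b2}).toReal * Real.exp (t * (ind b1 * a b2)) ≤ 1 := by
    intro i
    have hrm : ∀ b : Bool, (radMeasure {b}).toReal = 1/2 := by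
      intro b
      rw [radMeasure, PMF.toMeasure_apply_singleton _ _ (measurableSet_singleton _),
        PMF.uniformOfFintype_apply]
      simp [ENNReal.toReal_inv]
    have hνt : ν i {true} = p i := by
      rw [hν_def, PMF.toMeasure_apply_singleton _ _ (measurableSet_singleton _)]
      refine (PMF.bernoulli_apply _ true).trans ?_; exact ENNReal.coe_toNNReal ((hp i).trans_lt ENNReal.one_lt_top).ne
    have hνf : ν i {false} = 1 - p i := by
      rw [hν_def, PMF.toMeasure_apply_singleton _ _ (measurableSet_singleton _)]
      refine (PMF.bernoulli_apply _ false).trans ?_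
      show ((1 - (p i).toNNReal : NNReal) : ENNReal) = 1 - p i
      rw [ENNReal.coe_sub, ENNReal.coe_one, ENNReal.coe_toNNReal ((hp i).trans_lt ENNReal.one_lt_top).ne]
    have hWsum : (ν i {true}).toReal + (ν i {false}).toReal = 1 := by
      rw [hνt, hνf, ← ENNReal.toReal_add (by exact ((hp i).trans_lt ENNReal.one_lt_top).ne)
        (by exact ((tsub_le_self).trans_lt ENNReal.one_lt_top).ne),
        add_tsub_cancel_of_le (hp i)]
      simp
    have hW0 : (0:ℝ) ≤ (ν i {true}).toReal := ENNReal.toReal_nonneg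
    have hW0' : (0:ℝ) ≤ (ν i {false}).toReal := ENNReal.toReal_nonneg
    have e1 : Real.exp (t * (ind true * a true)) = Real.exp (t * A) := by
      simp [ind, ha_def]
    have e2 : Real.exp (t * (ind true * a false)) = Real.exp (-(t * B)) := by
      simp [ind, ha_def]
    have e3 : ∀ b : Bool, Real.exp (t * (ind false * a b)) = 1 := by
      intro b; simp [ind]
    rw [Fintype.sum_bool, Fintype.sum_bool, Fintype.sum_bool, e1, e2, e3, e3]
    simp only [hrm]
    nlinarith [Real.exp_pos (t * A), Real.exp_pos (-(t * B)),
      mul_nonneg hW0 (sub_nonneg.mpr hkey)]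
  set μP := (Measure.pi ν).prod (Measure.pi fun _ : Fin m => radMeasure) with hμP_def
  set g : Fin m → Bool → Bool → ℝ := fun i b1 b2 =>
    (ν i {b1}).toReal * (radMeasure {b2}).toReal * Real.exp (t * (ind b1 * a b2)) with hg_def
  have hsing : ∀ x e : Fin m → Bool,
      μP {(x, e)} = (∏ i, ν i {x i}) * ∏ i, radMeasure {e i} := by
    intro x e
    rw [hμP_def, show ({(x, e)} : Set ((Fin m → Bool) × (Fin m → Bool))) = {x} ×ˢ {e} by
        rw [Set.singleton_prod_singleton],
      Measure.prod_prod, ← Set.univ_pi_singleton x, ← Set.univ_pi_singleton e,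
      Measure.pi_pi, Measure.pi_pi]
  calc (∫ ω : (Fin m → Bool) × (Fin m → Bool),
        Real.exp (t * ∑ i,
          ind (ω.1 i) *
            ((rad (ω.2 i) + (rad (ω.2 i) * ((c + c₂) / 2) - (c - c₂) / 2)) -
              (rad (ω.2 i) * ((c + c₂) / 2) - (c - c₂) / 2) * (1 - h ^ 2) * Y i ω)) ∂μP)
      ≤ ∫ ω : (Fin m → Bool) × (Fin m → Bool),
          ∏ i, Real.exp (t * (ind (ω.1 i) * a (ω.2 i))) ∂μP :=
        integral_mono (Integrable.of_finite) (Integrable.of_finite) hpt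
    _ = ∑ ω : (Fin m → Bool) × (Fin m → Bool),
          (μP {ω}).toReal • ∏ i, Real.exp (t * (ind (ω.1 i) * a (ω.2 i))) :=
        integral_fintype (Integrable.of_finite)
    _ = ∑ x : Fin m → Bool, ∑ e : Fin m → Bool, ∏ i, g i (x i) (e i) := by
        rw [Fintype.sum_prod_type]
        refine Finset.sum_congr rfl fun x _ => Finset.sum_congr rfl fun e _ => ?_
        rw [hsing, ENNReal.toReal_mul, ENNReal.toReal_prod, ENNReal.toReal_prod, smul_eq_mul,
          ← Finset.prod_mul_distrib, ← Finset.prod_mul_distrib]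
    _ = ∑ x : Fin m → Bool, ∏ i, ∑ b2 : Bool, g i (x i) b2 := by
        refine Finset.sum_congr rfl fun x _ => ?_
        exact (Fintype.prod_sum fun i b2 => g i (x i) b2).symm
    _ = ∏ i, ∑ b1 : Bool, ∑ b2 : Bool, g i b1 b2 :=
        (Fintype.prod_sum fun i b1 => ∑ b2 : Bool, g i b1 b2).symm
    _ ≤ 1 := by
        apply Finset.prod_le_one
        · intro i _
          apply Finset.sum_nonneg
          intro b1 _
          apply Finset.sum_nonneg
          intro b2 _
          have := Real.exp_pos (t * (ind b1 * a b2))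
          positivity
        · intro i _
          exact hfac i
end
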